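/- Define H₂(r₁,r₂) = (r₁(1−r₂)r₂²/(1−r₁−r₂)²)·ln((1−r₂)/r₁) − r₁r₂²/(1−r₁−r₂) for (r₁,r₂) ∈ (0,1)² with r₁+r₂ ≠ 1. Then for each fixed r₂ ∈ (0,1), H₂ is strictly increasing in r₁ on its domain. -/

import Mathlib

/-- `H₂`, extended by its limit value on the anti-diagonal `r₁ + r₂ = 1`. -/
noncomputable def H2 (r₁ r₂ : ℝ) : ℝ :=
  if r₁ + r₂ = 1 then (1 - r₁) ^ 2 / 2
  else r₁ * (1 - r₂) * r₂ ^ 2 / (1 - r₁ - r₂) ^ 2 * Real.log ((1 - r₂) / r₁)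
    - r₁ * r₂ ^ 2 / (1 - r₁ - r₂)

open Real Set

/-- Padé inequality: `(y+1) log y > 2(y-1)` for `y > 1`. -/
lemma phi_pos {y : ℝ} (hy : 1 < y) : 0 < (y + 1) * Real.log y - 2 * (y - 1) := by
  have key : StrictMonoOn (fun y : ℝ => (y + 1) * Real.log y - 2 * (y - 1)) (Ici 1) := by
    apply strictMonoOn_of_deriv_pos (convex_Ici 1)
    · intro z hz
      have hz0 : z ≠ 0 := by simp only [mem_Ici] at hz; intro h; rw [h] at hz; linarith
      exact ((((hasDerivAt_id z).add_const 1).mul (Real.hasDerivAt_log hz0)).sub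
        (((hasDerivAt_id z).sub_const 1).const_mul 2)).continuousAt.continuousWithinAt
    · intro z hz
      rw [interior_Ici] at hz
      have hz1 : (1:ℝ) < z := hz
      have hz0 : z ≠ 0 := by linarith
      have hd : HasDerivAt (fun y : ℝ => (y + 1) * Real.log y - 2 * (y - 1))
          (1 * Real.log z + (z + 1) * z⁻¹ - 2 * 1) z :=
        (((hasDerivAt_id z).add_const 1).mul (Real.hasDerivAt_log hz0)).sub
          (((hasDerivAt_id z).sub_const 1).const_mul 2)
      rw [hd.deriv]
      have hinv : 0 < z⁻¹ := by positivity
      have hne : z⁻¹ ≠ 1 := by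
        intro hh; apply absurd hz1; rw [show z = 1 by field_simp at hh; linarith]; simp
      have hlog := Real.log_lt_sub_one_of_pos hinv hne
      rw [Real.log_inv] at hlog
      have hzz : z * z⁻¹ = 1 := mul_inv_cancel₀ hz0
      nlinarith [mul_pos (show (0:ℝ) < z by linarith) hinv]
  have := key self_mem_Ici (le_of_lt hy) hy
  simpa using this

lemma g_neg {x : ℝ} (hx : 1 < x) : 2 * x - 2 - (1 + x) * Real.log x < 0 := by
  have := phi_pos hx; nlinarith

lemma g_pos {x : ℝ} (hx0 : 0 < x) (hx1 : x < 1) : 0 < 2 * x - 2 - (1 + x) * Real.log x := by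
  have hy : 1 < x⁻¹ := (one_lt_inv_iff₀).mpr ⟨hx0, hx1⟩
  have h := phi_pos hy
  rw [Real.log_inv] at h
  have hxx : x * x⁻¹ = 1 := mul_inv_cancel₀ (ne_of_gt hx0)
  nlinarith [mul_pos hx0 h]

lemma psi_hasDeriv {x : ℝ} (hx : x ≠ 0) :
    HasDerivAt (fun x : ℝ => (x - x⁻¹) / 2 - Real.log x)
      ((1 - (-(x^2)⁻¹)) / 2 - x⁻¹) x :=
  (((hasDerivAt_id x).sub (hasDerivAt_inv hx)).div_const 2).sub (Real.hasDerivAt_log hx)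

lemma psi_deriv_pos {x : ℝ} (hx0 : 0 < x) (hx1 : x ≠ 1) :
    0 < (1 - (-(x^2)⁻¹)) / 2 - x⁻¹ := by
  have h2 : (1 - (-(x^2)⁻¹)) / 2 - x⁻¹ = (x - 1)^2 / (2 * x^2) := by
    field_simp; ring
  rw [h2]
  have hne : x - 1 ≠ 0 := sub_ne_zero.mpr hx1
  positivity

lemma psi_neg {x : ℝ} (hx0 : 0 < x) (hx1 : x < 1) :
    (x - x⁻¹) / 2 - Real.log x < 0 := by
  have key : StrictMonoOn (fun x : ℝ => (x - x⁻¹) / 2 - Real.log x) (Ioc 0 1) := by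
    apply strictMonoOn_of_deriv_pos (convex_Ioc 0 1)
    · intro z hz
      exact (psi_hasDeriv (ne_of_gt hz.1)).continuousAt.continuousWithinAt
    · intro z hz
      rw [interior_Ioc] at hz
      rw [(psi_hasDeriv (ne_of_gt hz.1)).deriv]
      exact psi_deriv_pos hz.1 (ne_of_lt hz.2)
  have := key ⟨hx0, le_of_lt hx1⟩ ⟨zero_lt_one, le_refl 1⟩ hx1
  simpa using this

lemma psi_pos {x : ℝ} (hx : 1 < x) :
    0 < (x - x⁻¹) / 2 - Real.log x := by
  have key : StrictMonoOn (fun x : ℝ => (x - x⁻¹) / 2 - Real.log x) (Ici 1) := by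
    apply strictMonoOn_of_deriv_pos (convex_Ici 1)
    · intro z hz
      have : (0:ℝ) < z := lt_of_lt_of_le zero_lt_one hz
      exact (psi_hasDeriv (ne_of_gt this)).continuousAt.continuousWithinAt
    · intro z hz
      rw [interior_Ici] at hz
      rw [(psi_hasDeriv (ne_of_gt (lt_trans zero_lt_one hz))).deriv]
      exact psi_deriv_pos (lt_trans zero_lt_one hz) (ne_of_gt hz)
  have := key self_mem_Ici (le_of_lt hx) hx
  simpa using this

noncomputable def f0 (x : ℝ) : ℝ := (x ^ 2 - x - x * Real.log x) / (1 - x) ^ 2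

lemma f0_hasDeriv {x : ℝ} (hx0 : 0 < x) (hx1 : x ≠ 1) :
    HasDerivAt f0 ((2 * x - 2 - (1 + x) * Real.log x) / (1 - x) ^ 3) x := by
  have hx0' : x ≠ 0 := ne_of_gt hx0
  have h1x : (1:ℝ) - x ≠ 0 := sub_ne_zero.mpr (Ne.symm hx1)
  have hN : HasDerivAt (fun x : ℝ => x ^ 2 - x - x * Real.log x)
      (2 * x ^ 1 - 1 - (1 * Real.log x + x * x⁻¹)) x :=
    ((hasDerivAt_pow 2 x).sub (hasDerivAt_id x)).sub
      ((hasDerivAt_id x).mul (Real.hasDerivAt_log hx0'))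
  have hD : HasDerivAt (fun x : ℝ => (1 - x) ^ 2) ((2:ℕ) * (1 - x) ^ 1 * (-1)) x :=
    ((hasDerivAt_id x).const_sub 1).pow 2
  have hdiv := hN.div hD (pow_ne_zero 2 h1x)
  convert hdiv using 1
  · rfl
  · rfl
  · rfl
  field_simp
  ring

lemma f0_mono1 : StrictMonoOn f0 (Ioo 0 1) := by
  apply strictMonoOn_of_deriv_pos (convex_Ioo 0 1)
  · intro x hx
    exact (f0_hasDeriv hx.1 (ne_of_lt hx.2)).continuousAt.continuousWithinAt
  · rw [interior_Ioo]
    intro x hx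
    rw [(f0_hasDeriv hx.1 (ne_of_lt hx.2)).deriv]
    exact div_pos (g_pos hx.1 hx.2) (pow_pos (by linarith [hx.2] : (0:ℝ) < 1 - x) 3)

lemma f0_mono2 : StrictMonoOn f0 (Ioi 1) := by
  apply strictMonoOn_of_deriv_pos (convex_Ioi 1)
  · intro x hx
    have hx1 : (1:ℝ) < x := hx
    exact (f0_hasDeriv (lt_trans zero_lt_one hx1) (ne_of_gt hx1)).continuousAt.continuousWithinAt
  · rw [interior_Ioi]
    intro x hx
    have hx1 : (1:ℝ) < x := hx
    rw [(f0_hasDeriv (lt_trans zero_lt_one hx1) (ne_of_gt hx1)).deriv]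
    exact div_pos_of_neg_of_neg (g_neg hx1)
      (Odd.pow_neg (by decide) (by linarith : (1:ℝ) - x < 0))

lemma f0_lt_half {x : ℝ} (hx0 : 0 < x) (hx1 : x < 1) : f0 x < 1 / 2 := by
  have hpsi := psi_neg hx0 hx1
  have h2 : (0:ℝ) < (1 - x) ^ 2 := by nlinarith
  rw [f0, div_lt_iff₀ h2]
  have h3 : x * ((x - x⁻¹) / 2) < x * Real.log x :=
    mul_lt_mul_of_pos_left (by linarith) hx0
  have h4 : x * ((x - x⁻¹) / 2) = (x ^ 2 - 1) / 2 := by field_simp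
  nlinarith

lemma f0_gt_half {x : ℝ} (hx : 1 < x) : 1 / 2 < f0 x := by
  have hpsi := psi_pos hx
  have hx0 : (0:ℝ) < x := lt_trans zero_lt_one hx
  have h2 : (0:ℝ) < (1 - x) ^ 2 := by nlinarith
  rw [f0, lt_div_iff₀ h2]
  have h3 : x * Real.log x < x * ((x - x⁻¹) / 2) :=
    mul_lt_mul_of_pos_left (by linarith) hx0
  have h4 : x * ((x - x⁻¹) / 2) = (x ^ 2 - 1) / 2 := by field_simp
  nlinarith

noncomputable def fe (x : ℝ) : ℝ := if x = 1 then 1 / 2 else f0 x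

lemma fe_mono : StrictMonoOn fe (Ioi 0) := by
  intro x hx y hy hxy
  simp only [mem_Ioi] at hx hy
  unfold fe
  rcases lt_trichotomy x 1 with hx1 | hx1 | hx1 <;>
    rcases lt_trichotomy y 1 with hy1 | hy1 | hy1
  · rw [if_neg (ne_of_lt hx1), if_neg (ne_of_lt hy1)]
    exact f0_mono1 ⟨hx, hx1⟩ ⟨hy, hy1⟩ hxy
  · rw [if_neg (ne_of_lt hx1), if_pos hy1]
    exact f0_lt_half hx hx1
  · rw [if_neg (ne_of_lt hx1), if_neg (ne_of_gt hy1)]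
    exact lt_trans (f0_lt_half hx hx1) (f0_gt_half hy1)
  · exact absurd (hx1 ▸ hxy) (not_lt.mpr (le_of_lt hy1))
  · exact absurd (hx1 ▸ hy1 ▸ hxy) (lt_irrefl 1)
  · rw [if_pos hx1, if_neg (ne_of_gt hy1)]
    exact f0_gt_half hy1
  · linarith
  · linarith
  · rw [if_neg (ne_of_gt hx1), if_neg (ne_of_gt hy1)]
    exact f0_mono2 hx1 hy1 hxy

lemma H2_eq (r₁ r₂ : ℝ) (h1 : 0 < r₁) (h2 : r₂ < 1) :
    H2 r₁ r₂ = r₂ ^ 2 * fe (r₁ / (1 - r₂)) := by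
  have hb : 0 < 1 - r₂ := by linarith
  unfold H2 fe
  by_cases hc : r₁ + r₂ = 1
  · have hq : r₁ / (1 - r₂) = 1 := by
      rw [div_eq_one_iff_eq (ne_of_gt hb)]; linarith
    rw [if_pos hc, hq, if_pos rfl]
    have h1r : 1 - r₁ = r₂ := by linarith
    rw [h1r]; ring
  · have hq : r₁ / (1 - r₂) ≠ 1 := by
      intro hh
      rw [div_eq_one_iff_eq (ne_of_gt hb)] at hh
      exact hc (by linarith)
    rw [if_neg hc, if_neg hq]
    unfold f0
    have hlog : Real.log ((1 - r₂) / r₁) = -Real.log (r₁ / (1 - r₂)) := by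
      rw [← Real.log_inv, inv_div]
    rw [hlog]
    have hd : (1 : ℝ) - r₁ - r₂ ≠ 0 := fun hh => hc (by linarith)
    have hb' : (1 : ℝ) - r₂ ≠ 0 := ne_of_gt hb
    have hx2 : (1 : ℝ) - r₁ / (1 - r₂) = (1 - r₁ - r₂) / (1 - r₂) := by
      field_simp; ring
    rw [hx2]
    generalize Real.log (r₁ / (1 - r₂)) = L
    field_simp
    ring

theorem stmt_15 (r₂ : ℝ) (h : r₂ ∈ Set.Ioo (0 : ℝ) 1) :
    StrictMonoOn (fun r₁ => H2 r₁ r₂) (Set.Ioo (0 : ℝ) 1) := by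
  intro a ha b hb hab
  have hbpos : 0 < 1 - r₂ := by linarith [h.2]
  simp only []
  rw [H2_eq a r₂ ha.1 h.2, H2_eq b r₂ hb.1 h.2]
  have hr2 : (0:ℝ) < r₂ ^ 2 := pow_pos h.1 2
  apply mul_lt_mul_of_pos_left _ hr2
  exact fe_mono (mem_Ioi.mpr (div_pos ha.1 hbpos)) (mem_Ioi.mpr (div_pos hb.1 hbpos))
    (by gcongr)
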